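/- Let α > 0. For every λ ≥ −1 the improper Riemann integral lim_{R→∞} ∫_{1}^{R} ξ^{−1/2} e^{i(λξ + ξ^{α+1})} dξ exists; the resulting function is continuous on [−1, ∞) and tends to 0 as λ → +∞. -/

import Mathlib

open MeasureTheory Filter

noncomputable def NSpsi (α l ξ : ℝ) : ℝ := l + (α + 1) * ξ ^ α

noncomputable def NSB (α l ξ : ℝ) : ℝ := ξ ^ (-(2⁻¹) : ℝ) / NSpsi α l ξ

noncomputable def NSB' (α l ξ : ℝ) : ℝ :=
  ((-(2⁻¹) : ℝ) * ξ ^ ((-(2⁻¹) : ℝ) - 1) * NSpsi α l ξ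
    - ξ ^ (-(2⁻¹) : ℝ) * ((α + 1) * (α * ξ ^ (α - 1)))) / (NSpsi α l ξ) ^ 2

noncomputable def NSE (α l ξ : ℝ) : ℂ :=
  Complex.exp (Complex.I * ((l * ξ + ξ ^ (α + 1) : ℝ) : ℂ))

noncomputable def NSF (α l ξ : ℝ) : ℂ := (-Complex.I * (NSB' α l ξ : ℂ)) * NSE α l ξ

noncomputable def NSh (α l : ℝ) : ℂ :=
  Complex.I * (NSB α l 1 : ℂ) * NSE α l 1 - ∫ ξ in Set.Ioi (1:ℝ), NSF α l ξ

lemma NSpsi_ge (α l ξ : ℝ) (hα : 0 < α) (hl : -1 ≤ l) (hξ : 1 ≤ ξ) :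
    α ≤ NSpsi α l ξ := by
  have ht : 1 ≤ ξ ^ α := Real.one_le_rpow hξ hα.le
  unfold NSpsi; nlinarith

lemma NSpsi_ge' (α l ξ : ℝ) (hα : 0 < α) (hl : -1 ≤ l) (hξ : 1 ≤ ξ) :
    α * ξ ^ α ≤ NSpsi α l ξ := by
  have ht : 1 ≤ ξ ^ α := Real.one_le_rpow hξ hα.le
  unfold NSpsi; nlinarith

lemma NSpsi_pos (α l ξ : ℝ) (hα : 0 < α) (hl : -1 ≤ l) (hξ : 1 ≤ ξ) :
    0 < NSpsi α l ξ := lt_of_lt_of_le hα (NSpsi_ge α l ξ hα hl hξ)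

lemma NSB'_eq (α l ξ : ℝ) (hξ : 0 < ξ) :
    NSB' α l ξ = -((2⁻¹ : ℝ) * ξ ^ ((-(2⁻¹) : ℝ) - 1) * NSpsi α l ξ
      + (α + 1) * α * (ξ ^ α * ξ ^ ((-(2⁻¹) : ℝ) - 1))) / (NSpsi α l ξ) ^ 2 := by
  have h : ξ ^ (-(2⁻¹) : ℝ) * ξ ^ (α - 1) = ξ ^ α * ξ ^ ((-(2⁻¹) : ℝ) - 1) := by
    rw [← Real.rpow_add hξ, ← Real.rpow_add hξ]; ring_nf
  unfold NSB'
  rw [show ξ ^ (-(2⁻¹) : ℝ) * ((α + 1) * (α * ξ ^ (α - 1)))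
      = (α + 1) * α * (ξ ^ (-(2⁻¹) : ℝ) * ξ ^ (α - 1)) by ring, h]
  ring

lemma NSB'_bound (α l ξ : ℝ) (hα : 0 < α) (hl : -1 ≤ l) (hξ : 1 ≤ ξ) :
    |NSB' α l ξ| ≤ ((2 * α + 3) / (2 * α)) * ξ ^ ((-(2⁻¹) : ℝ) - 1) := by
  have hξ0 : (0:ℝ) < ξ := lt_of_lt_of_le one_pos hξ
  have ht : 1 ≤ ξ ^ α := Real.one_le_rpow hξ hα.le
  have hs : 0 < ξ ^ ((-(2⁻¹) : ℝ) - 1) := Real.rpow_pos_of_pos hξ0 _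
  have hψ0 : 0 < NSpsi α l ξ := NSpsi_pos α l ξ hα hl hξ
  have hψα : α ≤ NSpsi α l ξ := NSpsi_ge α l ξ hα hl hξ
  have hψt : α * ξ ^ α ≤ NSpsi α l ξ := NSpsi_ge' α l ξ hα hl hξ
  set t := ξ ^ α
  set s := ξ ^ ((-(2⁻¹) : ℝ) - 1)
  set ψ := NSpsi α l ξ
  rw [NSB'_eq α l ξ hξ0, abs_div, abs_neg,
    abs_of_nonneg (by nlinarith [mul_pos hs hψ0, mul_pos (mul_pos (by linarith : (0:ℝ) < α + 1) hα) (mul_pos (lt_of_lt_of_le one_pos ht) hs)] : (0:ℝ) ≤ 2⁻¹ * s * ψ + (α + 1) * α * (t * s)),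
    abs_of_pos (by positivity : (0:ℝ) < ψ ^ 2),
    div_le_iff₀ (by positivity : (0:ℝ) < ψ ^ 2), div_mul_eq_mul_div, div_mul_eq_mul_div,
    le_div_iff₀ (by positivity : (0:ℝ) < 2 * α)]
  have h1 : α * ψ ≤ ψ ^ 2 := by nlinarith
  have h2 : α * (α * t) ≤ ψ ^ 2 := by nlinarith
  nlinarith [mul_le_mul_of_nonneg_left h1 hs.le,
    mul_le_mul_of_nonneg_left h2 (by positivity : (0:ℝ) ≤ 2 * (α + 1) * s)]

lemma NSB'_bound2 (α l ξ : ℝ) (hα : 0 < α) (hl : 1 ≤ l) (hξ : 1 ≤ ξ) :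
    |NSB' α l ξ| ≤ ((α + 2⁻¹) / l) * ξ ^ ((-(2⁻¹) : ℝ) - 1) := by
  have hξ0 : (0:ℝ) < ξ := lt_of_lt_of_le one_pos hξ
  have hl0 : (0:ℝ) < l := lt_of_lt_of_le one_pos hl
  have ht : 1 ≤ ξ ^ α := Real.one_le_rpow hξ hα.le
  have hs : 0 < ξ ^ ((-(2⁻¹) : ℝ) - 1) := Real.rpow_pos_of_pos hξ0 _
  have hψl : l ≤ NSpsi α l ξ := by unfold NSpsi; nlinarith
  have hψt : (α + 1) * ξ ^ α ≤ NSpsi α l ξ := by unfold NSpsi; nlinarith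
  have hψ0 : 0 < NSpsi α l ξ := lt_of_lt_of_le hl0 hψl
  set t := ξ ^ α
  set s := ξ ^ ((-(2⁻¹) : ℝ) - 1)
  set ψ := NSpsi α l ξ
  rw [NSB'_eq α l ξ hξ0, abs_div, abs_neg,
    abs_of_nonneg (by nlinarith [mul_pos hs hψ0, mul_pos (mul_pos (by linarith : (0:ℝ) < α + 1) hα) (mul_pos (lt_of_lt_of_le one_pos ht) hs)] : (0:ℝ) ≤ 2⁻¹ * s * ψ + (α + 1) * α * (t * s)),
    abs_of_pos (by positivity : (0:ℝ) < ψ ^ 2),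
    div_le_iff₀ (by positivity : (0:ℝ) < ψ ^ 2), div_mul_eq_mul_div, div_mul_eq_mul_div,
    le_div_iff₀ hl0]
  have h1 : l * ψ ≤ ψ ^ 2 := by nlinarith
  have h2 : l * ((α + 1) * t) ≤ ψ ^ 2 := by nlinarith
  nlinarith [mul_le_mul_of_nonneg_left h1 hs.le,
    mul_le_mul_of_nonneg_left h2 (by positivity : (0:ℝ) ≤ α * s)]

lemma hasDerivAt_NSE (α l ξ : ℝ) (hα : 0 < α) :
    HasDerivAt (fun x => NSE α l x) (Complex.I * (NSpsi α l ξ : ℂ) * NSE α l ξ) ξ := by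
  have hφ : HasDerivAt (fun x : ℝ => l * x + x ^ (α + 1)) (NSpsi α l ξ) ξ := by
    have h1 : HasDerivAt (fun x : ℝ => l * x) l ξ := by
      simpa using (hasDerivAt_id ξ).const_mul l
    have h2 : HasDerivAt (fun x : ℝ => x ^ (α + 1)) ((α + 1) * ξ ^ α) ξ := by
      simpa using Real.hasDerivAt_rpow_const (p := α + 1) (Or.inr (by linarith))
    unfold NSpsi; exact h1.add h2
  have hC : HasDerivAt (fun x : ℝ => ((l * x + x ^ (α + 1) : ℝ) : ℂ))
      ((NSpsi α l ξ : ℝ) : ℂ) ξ := hφ.ofReal_comp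
  have := (hC.const_mul Complex.I).cexp
  simpa [NSE, mul_comm, mul_assoc, mul_left_comm] using this

lemma hasDerivAt_NSB (α l ξ : ℝ) (hα : 0 < α) (hl : -1 ≤ l) (hξ : 1 ≤ ξ) :
    HasDerivAt (fun x => NSB α l x) (NSB' α l ξ) ξ := by
  have hξ0 : ξ ≠ 0 := by positivity
  have hnum : HasDerivAt (fun x : ℝ => x ^ (-(2⁻¹) : ℝ))
      ((-(2⁻¹) : ℝ) * ξ ^ ((-(2⁻¹) : ℝ) - 1)) ξ :=
    Real.hasDerivAt_rpow_const (Or.inl hξ0)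
  have hden : HasDerivAt (fun x => NSpsi α l x) ((α + 1) * (α * ξ ^ (α - 1))) ξ := by
    have h2 : HasDerivAt (fun x : ℝ => x ^ α) (α * ξ ^ (α - 1)) ξ :=
      Real.hasDerivAt_rpow_const (Or.inl hξ0)
    exact (h2.const_mul (α + 1)).const_add l
  exact hnum.div hden (ne_of_gt (NSpsi_pos α l ξ hα hl hξ))

lemma norm_NSE (α l ξ : ℝ) : ‖NSE α l ξ‖ = 1 := by
  rw [NSE, Complex.norm_exp_I_mul_ofReal]

lemma norm_NSF (α l ξ : ℝ) : ‖NSF α l ξ‖ = |NSB' α l ξ| := by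
  rw [NSF, norm_mul, norm_mul, norm_NSE, Complex.norm_real]
  simp

lemma contOn_rpow (p : ℝ) : ContinuousOn (fun x : ℝ => x ^ p) (Set.Ici (1:ℝ)) :=
  fun x hx => (Real.continuousAt_rpow_const x p
    (Or.inl (by have : (1:ℝ) ≤ x := hx; positivity))).continuousWithinAt

lemma contOn_NSpsi (α l : ℝ) : ContinuousOn (fun ξ => NSpsi α l ξ) (Set.Ici (1:ℝ)) :=
  continuousOn_const.add (continuousOn_const.mul (contOn_rpow α))

lemma contOn_NSE (α l : ℝ) : ContinuousOn (fun ξ => NSE α l ξ) (Set.Ici (1:ℝ)) := by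
  apply Complex.continuous_exp.comp_continuousOn
  apply continuousOn_const.mul
  exact Complex.continuous_ofReal.comp_continuousOn
    ((continuous_const.mul continuous_id).continuousOn.add (contOn_rpow (α + 1)))

lemma contOn_NSB' (α l : ℝ) (hα : 0 < α) (hl : -1 ≤ l) :
    ContinuousOn (fun ξ => NSB' α l ξ) (Set.Ici (1:ℝ)) := by
  apply ContinuousOn.div
  · exact ((continuousOn_const.mul (contOn_rpow _)).mul (contOn_NSpsi α l)).sub
      ((contOn_rpow _).mul (continuousOn_const.mul (continuousOn_const.mul (contOn_rpow _))))
  · exact (contOn_NSpsi α l).pow 2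
  · intro x hx
    exact pow_ne_zero 2 (ne_of_gt (NSpsi_pos α l x hα hl hx))

lemma contOn_NSF (α l : ℝ) (hα : 0 < α) (hl : -1 ≤ l) :
    ContinuousOn (fun ξ => NSF α l ξ) (Set.Ici (1:ℝ)) :=
  ((continuousOn_const.mul
    (Complex.continuous_ofReal.comp_continuousOn (contOn_NSB' α l hα hl))).mul
    (contOn_NSE α l))

lemma integrable_bound (α : ℝ) (c : ℝ) :
    Integrable (fun ξ : ℝ => c * ξ ^ ((-(2⁻¹) : ℝ) - 1))
      (volume.restrict (Set.Ioi (1:ℝ))) :=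
  (integrableOn_Ioi_rpow_of_lt (by norm_num) one_pos).const_mul c

lemma integrable_NSF (α l : ℝ) (hα : 0 < α) (hl : -1 ≤ l) :
    Integrable (fun ξ => NSF α l ξ) (volume.restrict (Set.Ioi (1:ℝ))) := by
  apply Integrable.mono' (integrable_bound α ((2 * α + 3) / (2 * α)))
  · exact ((contOn_NSF α l hα hl).mono (Set.Ioi_subset_Ici le_rfl)).aestronglyMeasurable
      measurableSet_Ioi
  · rw [ae_restrict_iff' measurableSet_Ioi]
    filter_upwards with ξ hξ
    rw [norm_NSF]
    exact NSB'_bound α l ξ hα hl (le_of_lt hξ)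

lemma NS_ibp (α l R : ℝ) (hα : 0 < α) (hl : -1 ≤ l) (hR : 1 ≤ R) :
    (∫ ξ in (1:ℝ)..R, ((ξ ^ (-(2⁻¹) : ℝ) : ℝ) : ℂ) * NSE α l ξ)
      = (-Complex.I * (NSB α l R : ℂ)) * NSE α l R
        - (-Complex.I * (NSB α l 1 : ℂ)) * NSE α l 1
        - ∫ ξ in (1:ℝ)..R, NSF α l ξ := by
  have huIcc : Set.uIcc (1:ℝ) R = Set.Icc 1 R := Set.uIcc_of_le hR
  have hsub : Set.Icc (1:ℝ) R ⊆ Set.Ici 1 := fun x hx => hx.1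
  have hu : ∀ x ∈ Set.uIcc (1:ℝ) R,
      HasDerivAt (fun x => -Complex.I * (NSB α l x : ℂ)) (-Complex.I * (NSB' α l x : ℂ)) x := by
    intro x hx
    rw [huIcc] at hx
    exact ((hasDerivAt_NSB α l x hα hl hx.1).ofReal_comp).const_mul (-Complex.I)
  have hv : ∀ x ∈ Set.uIcc (1:ℝ) R,
      HasDerivAt (fun x => NSE α l x) (Complex.I * (NSpsi α l x : ℂ) * NSE α l x) x :=
    fun x _ => hasDerivAt_NSE α l x hα
  have hu' : IntervalIntegrable (fun x => -Complex.I * (NSB' α l x : ℂ)) volume 1 R := by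
    apply ContinuousOn.intervalIntegrable
    rw [huIcc]
    exact continuousOn_const.mul
      (Complex.continuous_ofReal.comp_continuousOn ((contOn_NSB' α l hα hl).mono hsub))
  have hv' : IntervalIntegrable (fun x => Complex.I * (NSpsi α l x : ℂ) * NSE α l x)
      volume 1 R := by
    apply ContinuousOn.intervalIntegrable
    rw [huIcc]
    exact ((continuousOn_const.mul
      (Complex.continuous_ofReal.comp_continuousOn ((contOn_NSpsi α l).mono hsub))).mul
      ((contOn_NSE α l).mono hsub))
  have key := intervalIntegral.integral_mul_deriv_eq_deriv_mul hu hv hu' hv'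
  have hcongr : (∫ ξ in (1:ℝ)..R, ((ξ ^ (-(2⁻¹) : ℝ) : ℝ) : ℂ) * NSE α l ξ)
      = ∫ x in (1:ℝ)..R,
          (-Complex.I * (NSB α l x : ℂ)) * (Complex.I * (NSpsi α l x : ℂ) * NSE α l x) := by
    apply intervalIntegral.integral_congr
    intro x hx
    rw [huIcc] at hx
    have hψ : NSpsi α l x ≠ 0 := ne_of_gt (NSpsi_pos α l x hα hl hx.1)
    have hBψ : (NSB α l x : ℝ) * NSpsi α l x = x ^ (-(2⁻¹) : ℝ) := by
      rw [NSB, div_mul_cancel₀ _ hψ]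
    have : ((NSB α l x : ℝ) : ℂ) * ((NSpsi α l x : ℝ) : ℂ) = ((x ^ (-(2⁻¹) : ℝ) : ℝ) : ℂ) := by
      rw [← Complex.ofReal_mul, hBψ]
    calc ((x ^ (-(2⁻¹) : ℝ) : ℝ) : ℂ) * NSE α l x
        = (((NSB α l x : ℝ) : ℂ) * ((NSpsi α l x : ℝ) : ℂ)) * NSE α l x := by rw [this]
      _ = (-Complex.I * (NSB α l x : ℂ)) * (Complex.I * (NSpsi α l x : ℂ) * NSE α l x) := by
          have hI : -Complex.I * Complex.I = 1 := by
            simp [Complex.I_mul_I]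
          ring_nf
          rw [Complex.I_sq]
          ring
  rw [hcongr, key]
  rfl

lemma NS_tendsto (α l : ℝ) (hα : 0 < α) (hl : -1 ≤ l) :
    Tendsto (fun R : ℝ => ∫ ξ in (1:ℝ)..R, ((ξ ^ (-(2⁻¹) : ℝ) : ℝ) : ℂ) * NSE α l ξ)
      atTop (nhds (NSh α l)) := by
  have h1 : Tendsto (fun R : ℝ => (-Complex.I * (NSB α l R : ℂ)) * NSE α l R)
      atTop (nhds 0) := by
    apply squeeze_zero_norm' (a := fun R : ℝ => α⁻¹ * R ^ (-(2⁻¹) : ℝ))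
    · filter_upwards [eventually_ge_atTop (1:ℝ)] with R hR
      have hψ : α ≤ NSpsi α l R := NSpsi_ge α l R hα hl hR
      have hψ0 : 0 < NSpsi α l R := NSpsi_pos α l R hα hl hR
      have hr : 0 < R ^ (-(2⁻¹) : ℝ) := Real.rpow_pos_of_pos (by linarith) _
      rw [norm_mul, norm_mul, norm_NSE, mul_one, Complex.norm_real, Real.norm_eq_abs]
      have hB : |NSB α l R| = R ^ (-(2⁻¹) : ℝ) / NSpsi α l R := by
        rw [NSB, abs_of_pos (div_pos hr hψ0)]
      rw [hB]
      simp only [norm_neg, Complex.norm_I, one_mul]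
      rw [div_le_iff₀ hψ0, inv_mul_eq_div, div_mul_eq_mul_div, le_div_iff₀ hα]
      nlinarith
    · simpa using (tendsto_rpow_neg_atTop (by norm_num : (0:ℝ) < 2⁻¹)).const_mul α⁻¹
  have h2 : Tendsto (fun R : ℝ => ∫ ξ in (1:ℝ)..R, NSF α l ξ) atTop
      (nhds (∫ ξ in Set.Ioi (1:ℝ), NSF α l ξ)) :=
    intervalIntegral_tendsto_integral_Ioi 1 (integrable_NSF α l hα hl) tendsto_id
  have h3 := (h1.sub (tendsto_const_nhds (x := (-Complex.I * (NSB α l 1 : ℂ)) * NSE α l 1) (f := (atTop : Filter ℝ)))).sub h2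
  rw [show NSh α l = (0:ℂ) - (-Complex.I * (NSB α l 1 : ℂ)) * NSE α l 1
      - ∫ ξ in Set.Ioi (1:ℝ), NSF α l ξ by rw [NSh]; ring]
  apply h3.congr'
  filter_upwards [eventually_ge_atTop (1:ℝ)] with R hR
  exact (NS_ibp α l R hα hl hR).symm

lemma NS_contOn (α : ℝ) (hα : 0 < α) : ContinuousOn (NSh α) (Set.Ici (-1:ℝ)) := by
  unfold NSh
  apply ContinuousOn.sub
  · -- boundary term
    apply ContinuousOn.mul
    · apply continuousOn_const.mul
      apply Complex.continuous_ofReal.comp_continuousOn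
      unfold NSB NSpsi
      apply continuousOn_const.div (continuousOn_id.add continuousOn_const)
      intro l hl
      have h1 : (1:ℝ) ≤ 1 ^ α := by rw [Real.one_rpow]
      have := NSpsi_pos α l 1 hα hl le_rfl
      unfold NSpsi at this
      exact ne_of_gt (by simpa using this)
    · unfold NSE
      apply Continuous.continuousOn
      exact Complex.continuous_exp.comp (continuous_const.mul
        (Complex.continuous_ofReal.comp ((continuous_id.mul continuous_const).add
          continuous_const)))
  · -- integral term
    intro l₀ hl₀
    apply continuousWithinAt_of_dominated
      (bound := fun ξ : ℝ => ((2 * α + 3) / (2 * α)) * ξ ^ ((-(2⁻¹) : ℝ) - 1))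
    · filter_upwards [self_mem_nhdsWithin] with l hl
      exact (integrable_NSF α l hα hl).aestronglyMeasurable
    · filter_upwards [self_mem_nhdsWithin] with l hl
      rw [ae_restrict_iff' measurableSet_Ioi]
      filter_upwards with ξ hξ
      rw [norm_NSF]
      exact NSB'_bound α l ξ hα hl (le_of_lt hξ)
    · exact integrable_bound α _
    · rw [ae_restrict_iff' measurableSet_Ioi]
      filter_upwards with ξ hξ
      have hξ1 : (1:ℝ) ≤ ξ := le_of_lt hξ
      have hψc : Continuous (fun l => NSpsi α l ξ) := by
        unfold NSpsi; exact continuous_id.add continuous_const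
      have hψ0 : NSpsi α l₀ ξ ≠ 0 := ne_of_gt (NSpsi_pos α l₀ ξ hα hl₀ hξ1)
      have hB'c : ContinuousAt (fun l => NSB' α l ξ) l₀ := by
        unfold NSB'
        exact ContinuousAt.div
          (((continuous_const.mul hψc).sub continuous_const).continuousAt)
          ((hψc.pow 2).continuousAt) (pow_ne_zero 2 hψ0)
      have hEc : Continuous (fun l => NSE α l ξ) := by
        unfold NSE
        exact Complex.continuous_exp.comp (continuous_const.mul
          (Complex.continuous_ofReal.comp ((continuous_id.mul continuous_const).add
            continuous_const)))
      exact ((((continuousAt_const.mul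
        (Complex.continuous_ofReal.continuousAt.comp hB'c)).mul
        hEc.continuousAt)).continuousWithinAt : _)

lemma NS_decay (α : ℝ) (hα : 0 < α) : Tendsto (NSh α) atTop (nhds 0) := by
  set K := ∫ ξ in Set.Ioi (1:ℝ), ξ ^ ((-(2⁻¹) : ℝ) - 1) with hK
  apply squeeze_zero_norm' (a := fun l : ℝ => l⁻¹ * (1 + (α + 2⁻¹) * K))
  · filter_upwards [eventually_ge_atTop (1:ℝ)] with l hl
    have hl0 : (0:ℝ) < l := by linarith
    have hψl : l ≤ NSpsi α l 1 := by
      have h1 : (1:ℝ) ^ α = 1 := Real.one_rpow α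
      unfold NSpsi; nlinarith
    have hψ0 : 0 < NSpsi α l 1 := lt_of_lt_of_le hl0 hψl
    have hterm1 : ‖Complex.I * (NSB α l 1 : ℂ) * NSE α l 1‖ ≤ l⁻¹ := by
      rw [norm_mul, norm_mul, norm_NSE, mul_one, Complex.norm_I, one_mul,
        Complex.norm_real, Real.norm_eq_abs]
      have hBeq : NSB α l 1 = 1 / NSpsi α l 1 := by rw [NSB, Real.one_rpow]
      rw [hBeq, abs_of_pos (by positivity)]
      have := one_div_le_one_div_of_le hl0 hψl
      simpa [one_div] using this
    have hterm2 : ‖∫ ξ in Set.Ioi (1:ℝ), NSF α l ξ‖ ≤ (α + 2⁻¹) / l * K := by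
      have hb : ∀ᵐ ξ ∂(volume.restrict (Set.Ioi (1:ℝ))),
          ‖NSF α l ξ‖ ≤ ((α + 2⁻¹) / l) * ξ ^ ((-(2⁻¹) : ℝ) - 1) := by
        rw [ae_restrict_iff' measurableSet_Ioi]
        filter_upwards with ξ hξ
        rw [norm_NSF]
        exact NSB'_bound2 α l ξ hα hl (le_of_lt hξ)
      have := norm_integral_le_of_norm_le (integrable_bound α ((α + 2⁻¹) / l)) hb
      rwa [MeasureTheory.integral_const_mul] at this
    calc ‖NSh α l‖ ≤ ‖Complex.I * (NSB α l 1 : ℂ) * NSE α l 1‖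
          + ‖∫ ξ in Set.Ioi (1:ℝ), NSF α l ξ‖ := norm_sub_le _ _
      _ ≤ l⁻¹ + (α + 2⁻¹) / l * K := add_le_add hterm1 hterm2
      _ = l⁻¹ * (1 + (α + 2⁻¹) * K) := by rw [div_eq_mul_inv]; ring
  · simpa using tendsto_inv_atTop_zero.mul_const (1 + (α + 2⁻¹) * K)

/-- For `α > 0`, the improper Riemann integral
`lim_{R→∞} ∫_1^R ξ^{-1/2} e^{i(λξ + ξ^{α+1})} dξ` exists for every `λ ≥ -1`;
the resulting function is continuous on `[-1, ∞)` and tends to `0` as `λ → +∞`. -/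
theorem nonstationary_case_exists_continuous_decay (α : ℝ) (hα : 0 < α) :
    ∃ h : ℝ → ℂ,
      (∀ l : ℝ, -1 ≤ l →
        Tendsto
          (fun R : ℝ => ∫ ξ in (1 : ℝ)..R,
            ((ξ ^ (-(2⁻¹) : ℝ) : ℝ) : ℂ) *
              Complex.exp (Complex.I * ((l * ξ + ξ ^ (α + 1) : ℝ) : ℂ)))
          atTop (nhds (h l))) ∧
      ContinuousOn h (Set.Ici (-1 : ℝ)) ∧
      Tendsto h atTop (nhds 0) := by
  exact ⟨NSh α, fun l hl => NS_tendsto α l hα hl, NS_contOn α hα, NS_decay α hα⟩
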